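/- Let i : M → M' be a fully faithful lax symmetric monoidal functor between presentable symmetric monoidal categories whose left adjoint i^L is strictly symmetric monoidal. Then for any M'-algebroid C and any M-algebroid D, the functor algebroid Funct(C, i_! D) lies in the essential image of i_! : Algbrd(M) → Algbrd(M'). -/

import Mathlib

open CategoryTheory CategoryTheory.Limits CategoryTheory.MonoidalCategory

universe v u v' u'

/-- Let `i : M → M'` be a fully faithful lax symmetric monoidal functor
between presentable symmetric monoidal categories, whose left adjoint `i^L` is
strictly symmetric monoidal.  Then for any `M'`-algebroid `C` and any
`M`-algebroid `D`, the functor algebroid `Funct(C, i_! D)` lies in the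
essential image of `i_! : Algbrd(M) → Algbrd(M')`.

We formalize this at the level of the closed symmetric monoidal categories
`𝒜 = Algbrd(M)` and `ℬ = Algbrd(M')`: given the induced fully faithful
functor `i = i_! : 𝒜 ⥤ ℬ` with strong symmetric monoidal left adjoint
`L = (i^L)_!`, the internal Hom `Funct(C, i D) = (ihom C).obj (i.obj D)` lies
in the essential image of `i` for every `C : ℬ` and `D : 𝒜`. -/
theorem stmt14 {A : Type u} [Category.{v} A] [MonoidalCategory A] [SymmetricCategory A]
    [MonoidalClosed A] [HasLimits A] [HasColimits A]
    {B : Type u'} [Category.{v'} B] [MonoidalCategory B] [SymmetricCategory B]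
    [MonoidalClosed B] [HasLimits B] [HasColimits B]
    (i : A ⥤ B) [i.Full] [i.Faithful] (L : B ⥤ A) [L.Monoidal] (adj : L ⊣ i)
    (C : B) (D : A) :
    i.essImage ((ihom C).obj (i.obj D)) := by
  have : IsIso (adj.unit.app ((ihom C).obj (i.obj D))) := inferInstance
  exact ⟨L.obj ((ihom C).obj (i.obj D)), ⟨(asIso (adj.unit.app _)).symm⟩⟩
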